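/- If u ∈ M_n(A) is a cubic unitary over a unital C*-algebra A, then the 2n×2n matrix w = [[α, β],[β, α]], where α_{ij} = (u_{ij}²+u_{ij})/2 and β_{ij} = (u_{ij}²−u_{ij})/2, is a magic unitary: all its entries are projections and each row and column sums to 1. -/
import Mathlib

open Matrix

private lemma aux_plus {A : Type*} [Ring A] [Algebra ℂ A] {x : A} (hx : x * x * x = x) :
    ((2:ℂ)⁻¹ • (x^2 + x)) * ((2:ℂ)⁻¹ • (x^2 + x)) = (2:ℂ)⁻¹ • (x^2 + x) := by
  have h4 : x^2 * x^2 = x * x := by rw [pow_two, ← mul_assoc, hx]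
  have h3a : x^2 * x = x := by rw [pow_two, hx]
  have h3b : x * x^2 = x := by rw [pow_two, ← mul_assoc, hx]
  have e : (x^2 + x) * (x^2 + x) = (2:ℂ) • (x^2 + x) := by
    rw [add_mul, mul_add, mul_add, h4, h3a, h3b, pow_two]
    module
  rw [smul_mul_assoc, mul_smul_comm, e, smul_smul, smul_smul]
  norm_num

private lemma aux_minus {A : Type*} [Ring A] [Algebra ℂ A] {x : A} (hx : x * x * x = x) :
    ((2:ℂ)⁻¹ • (x^2 - x)) * ((2:ℂ)⁻¹ • (x^2 - x)) = (2:ℂ)⁻¹ • (x^2 - x) := by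
  have h4 : x^2 * x^2 = x * x := by rw [pow_two, ← mul_assoc, hx]
  have h3a : x^2 * x = x := by rw [pow_two, hx]
  have h3b : x * x^2 = x := by rw [pow_two, ← mul_assoc, hx]
  have e : (x^2 - x) * (x^2 - x) = (2:ℂ) • (x^2 - x) := by
    rw [sub_mul, mul_sub, mul_sub, h4, h3a, h3b, pow_two]
    module
  rw [smul_mul_assoc, mul_smul_comm, e, smul_smul, smul_smul]
  norm_num

theorem cubic_to_sudoku {A : Type*} [NormedRing A] [StarRing A] [CStarRing A]
    [NormedAlgebra ℂ A] [StarModule ℂ A] [CompleteSpace A] {n : ℕ}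
    (u : Matrix (Fin n) (Fin n) A)
    (hsa : ∀ i j, IsSelfAdjoint (u i j))
    (horth₁ : u * u.transpose = 1) (horth₂ : u.transpose * u = 1)
    (hrow : ∀ i j k, j ≠ k → u i j * u i k = 0)
    (hcol : ∀ i j k, j ≠ k → u j i * u k i = 0) :
    let α : Matrix (Fin n) (Fin n) A := fun i j => (2 : ℂ)⁻¹ • (u i j ^ 2 + u i j)
    let β : Matrix (Fin n) (Fin n) A := fun i j => (2 : ℂ)⁻¹ • (u i j ^ 2 - u i j)
    let w := Matrix.fromBlocks α β β α
    (∀ i j, IsSelfAdjoint (w i j) ∧ IsIdempotentElem (w i j)) ∧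
      (∀ i, ∑ j, w i j = 1) ∧ (∀ j, ∑ i, w i j = 1) := by
  intro α β w
  have key_row : ∀ i, ∑ j, u i j * u i j = 1 := by
    intro i
    have h := Matrix.ext_iff.2 horth₁ i i
    simpa [Matrix.mul_apply, Matrix.one_apply] using h
  have key_col : ∀ j, ∑ i, u i j * u i j = 1 := by
    intro j
    have h := Matrix.ext_iff.2 horth₂ j j
    simpa [Matrix.mul_apply, Matrix.one_apply] using h
  have hx3 : ∀ i j, u i j * u i j * u i j = u i j := by
    intro i j
    have h : u i j * (∑ k, u i k * u i k) = u i j * u i j * u i j := by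
      rw [Finset.mul_sum, Finset.sum_eq_single_of_mem j (Finset.mem_univ j), ← mul_assoc]
      intro k _ hk
      rw [← mul_assoc, hrow i j k (Ne.symm hk), zero_mul]
    rw [← h, key_row i, mul_one]
  have h2 : IsSelfAdjoint ((2:ℂ)⁻¹) := by rw [_root_.IsSelfAdjoint]; simp
  have hsaα : ∀ i j, IsSelfAdjoint (α i j) := fun i j =>
    h2.smul (((hsa i j).pow 2).add (hsa i j))
  have hsaβ : ∀ i j, IsSelfAdjoint (β i j) := fun i j =>
    h2.smul (((hsa i j).pow 2).sub (hsa i j))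
  have hidα : ∀ i j, IsIdempotentElem (α i j) := fun i j => aux_plus (hx3 i j)
  have hidβ : ∀ i j, IsIdempotentElem (β i j) := fun i j => aux_minus (hx3 i j)
  have hsum : ∀ i j, α i j + β i j = u i j * u i j := by
    intro i j
    show (2:ℂ)⁻¹ • (u i j ^ 2 + u i j) + (2:ℂ)⁻¹ • (u i j ^ 2 - u i j) = u i j * u i j
    rw [pow_two]
    module
  refine ⟨?_, ?_, ?_⟩
  · rintro (i | i) (j | j)
    · exact ⟨hsaα i j, hidα i j⟩
    · exact ⟨hsaβ i j, hidβ i j⟩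
    · exact ⟨hsaβ i j, hidβ i j⟩
    · exact ⟨hsaα i j, hidα i j⟩
  · rintro (i | i) <;>
      rw [Fintype.sum_sum_type] <;>
      simp only [w, Matrix.fromBlocks_apply₁₁, Matrix.fromBlocks_apply₁₂,
        Matrix.fromBlocks_apply₂₁, Matrix.fromBlocks_apply₂₂] <;>
      rw [← Finset.sum_add_distrib]
    · simp_rw [hsum]; exact key_row i
    · have : ∀ j, β i j + α i j = u i j * u i j := fun j => by rw [add_comm]; exact hsum i j
      simp_rw [this]; exact key_row i
  · rintro (j | j) <;>
      rw [Fintype.sum_sum_type] <;>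
      simp only [w, Matrix.fromBlocks_apply₁₁, Matrix.fromBlocks_apply₁₂,
        Matrix.fromBlocks_apply₂₁, Matrix.fromBlocks_apply₂₂] <;>
      rw [← Finset.sum_add_distrib]
    · have : ∀ i, α i j + β i j = u i j * u i j := fun i => hsum i j
      simp_rw [this]; exact key_col j
    · have : ∀ i, β i j + α i j = u i j * u i j := fun i => by rw [add_comm]; exact hsum i j
      simp_rw [this]; exact key_col j
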